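/- Let 0 < s ≤ 1 and 0 < p < ∞, and let u ∈ Ṁ^{s,p}(X) be an M^{s,p}-quasicontinuous function. Let O ∈ X, j ∈ ℕ, t > 0, and define E_t = {x ∈ A_{κ^j}(O) : |u(x) − m_u(A_{κ^j}(O))| > t}. Then there is a constant C = C(p, c_μ, c_R, Λ) > 0 such that for every Λ ≥ 1 and every s-gradient g ∈ D_s(u), cap_{s,p}(E_t, Λ A_{κ^j}(O)) ≤ (C / t^p) ∫_{Λ A_{κ^j}(O)} g(x)^p dμ(x). -/

import Mathlib

open MeasureTheory Metric Set Filter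
open scoped ENNReal NNReal Topology

noncomputable section
namespace Paper

variable {X : Type*} [MetricSpace X] [MeasurableSpace X]

/-- The median `m_u(E)` of a function `u` over a set `E`. -/
def median (μ : Measure X) (u : X → ℝ) (E : Set X) : ℝ :=
  sInf {a : ℝ | μ {x | x ∈ E ∧ a < u x} < μ E / 2}

/-- `g` is an `s`-gradient of `u` (with respect to `μ`). -/
def IsSGradient (μ : Measure X) (s : ℝ) (u : X → ℝ) (g : X → ℝ≥0∞) : Prop :=
  Measurable g ∧ ∃ N : Set X, μ N = 0 ∧ ∀ x ∉ N, ∀ y ∉ N,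
    ENNReal.ofReal |u x - u y| ≤ ENNReal.ofReal (dist x y ^ s) * (g x + g y)

/-- The `p`-th power of the `L^p` quasinorm of `u : X → ℝ` restricted to `F`. -/
def lpNormP (μ : Measure X) (p : ℝ) (u : X → ℝ) (F : Set X) : ℝ≥0∞ :=
  ∫⁻ x in F, ENNReal.ofReal |u x| ^ p ∂μ

/-- Membership in the homogeneous Hajłasz–Sobolev space `Ṁ^{s,p}(X)`:
`u` is measurable (hence finite everywhere, being real valued) and has an
`s`-gradient in `L^p`. -/
def MemHomHajlasz (μ : Measure X) (s p : ℝ) (u : X → ℝ) : Prop :=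
  Measurable u ∧ ∃ g : X → ℝ≥0∞, IsSGradient μ s u g ∧ (∫⁻ x, g x ^ p ∂μ) < ⊤

/-- The homogeneous Hajłasz quasi-seminorm `‖u‖_{Ṁ^{s,p}}`. -/
def hajlaszSeminorm (μ : Measure X) (s p : ℝ) (u : X → ℝ) : ℝ≥0∞ :=
  ⨅ (g : X → ℝ≥0∞) (_ : IsSGradient μ s u g), (∫⁻ x, g x ^ p ∂μ) ^ (1 / p)

/-- The quasi-seminorm `‖u‖_{M^{s,p}} = ‖u‖_{L^p} + ‖u‖_{Ṁ^{s,p}}`. -/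
def hajlaszNorm (μ : Measure X) (s p : ℝ) (u : X → ℝ) : ℝ≥0∞ :=
  lpNormP μ p u Set.univ ^ (1 / p) + hajlaszSeminorm μ s p u

/-- The capacity `Cap_{M^{s,p}}(E)`; the infimum over the empty set is `⊤ = ∞`. -/
def hajlaszCapacity (μ : Measure X) (s p : ℝ) (E : Set X) : ℝ≥0∞ :=
  ⨅ (u : X → ℝ) (_ : MemHomHajlasz μ s p u ∧ lpNormP μ p u Set.univ < ⊤ ∧
      ∃ U : Set X, IsOpen U ∧ E ⊆ U ∧ ∀ x ∈ U, 1 ≤ u x),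
    hajlaszNorm μ s p u ^ p

/-- `M^{s,p}`-quasicontinuity of `u`. -/
def HajlaszQC (μ : Measure X) (s p : ℝ) (u : X → ℝ) : Prop :=
  ∀ ε : ℝ, 0 < ε → ∃ E : Set X,
    hajlaszCapacity μ s p E < ENNReal.ofReal ε ∧ ContinuousOn u Eᶜ

/-- The variational relative capacity `cap_{s,p}(E,F)`. -/
def relCap (μ : Measure X) (s p : ℝ) (E F : Set X) : ℝ≥0∞ :=
  ⨅ (v : X → ℝ) (_ : MemHomHajlasz μ s p v ∧ HajlaszQC μ s p v ∧ ∀ x ∈ E, 1 ≤ v x),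
    (lpNormP μ p v F / ENNReal.ofReal (Metric.diam F ^ (s * p)) +
      ⨅ (g : X → ℝ≥0∞) (_ : IsSGradient μ s v g), ∫⁻ x in F, g x ^ p ∂μ)

/-- The annulus `A_r(O) = B(O, κ r) \ B(O, r)`. -/
def ann (κ : ℝ) (O : X) (r : ℝ) : Set X := ball O (κ * r) \ ball O r

/-- The enlarged annulus `Λ A_r(O) = B(O, Λ κ r) \ B(O, r / Λ)`. -/
def annL (κ Λ : ℝ) (O : X) (r : ℝ) : Set X := ball O (Λ * (κ * r)) \ ball O (r / Λ)

/-- `E` is `(s,p)`-thin at infinity with respect to the basepoint `O`. -/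
def ThinAtInfinity (μ : Measure X) (s p κ : ℝ) (O : X) (E : Set X) : Prop :=
  ∀ Λ : ℝ, 1 < Λ →
    Tendsto (fun m : ℕ =>
        ∑' j : ℕ, relCap μ s p (E ∩ ann κ O (κ ^ (m + j))) (annL κ Λ O (κ ^ (m + j))))
      atTop (𝓝 0)

/-- `u(x) → c` as `d(x,O) → ∞` along `x ∈ X \ E`. -/
def TendstoOutside (O : X) (E : Set X) (u : X → ℝ) (c : ℝ) : Prop :=
  ∀ ε : ℝ, 0 < ε → ∃ N : ℕ, ∀ x : X, x ∉ E → (N : ℝ) < dist x O → |u x - c| < ε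

/-- The `ρ`-restricted Hausdorff content of codimension `d`, where the infimum runs
over all finite or countable coverings of `E` by balls of positive radii at most `ρ`. -/
def hContent (μ : Measure X) (d : ℝ) (ρ : ℝ≥0∞) (E : Set X) : ℝ≥0∞ :=
  ⨅ (c : ℕ → X) (r : ℕ → ℝ) (J : Set ℕ)
    (_ : (∀ j ∈ J, 0 < r j ∧ ENNReal.ofReal (r j) ≤ ρ) ∧
        E ⊆ ⋃ j ∈ J, ball (c j) (r j)),
    ∑' j : J, μ (ball (c (j : ℕ)) (r (j : ℕ))) / ENNReal.ofReal (r (j : ℕ) ^ d)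

/-- The homogeneous fractional Sobolev quasinorm `‖u‖_{Ẇ^{s,p}_q}`. -/
def fracNorm (μ : Measure X) (s p q : ℝ) (u : X → ℝ) : ℝ≥0∞ :=
  (∫⁻ x, (∫⁻ y, ENNReal.ofReal |u x - u y| ^ q /
      (ENNReal.ofReal (dist x y ^ (s * q)) * μ (ball x (dist x y))) ∂μ) ^ (p / q) ∂μ) ^ (1 / p)

/-- Membership in the homogeneous fractional Sobolev space `Ẇ^{s,p}_q(X)`. -/
def MemFrac (μ : Measure X) (s p q : ℝ) (u : X → ℝ) : Prop :=
  Measurable u ∧ fracNorm μ s p q u < ⊤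

/-- The capacity `Cap_{W^{s,p}_q}(E)`; the infimum over the empty set is `⊤ = ∞`. -/
def fracCapacity (μ : Measure X) (s p q : ℝ) (E : Set X) : ℝ≥0∞ :=
  ⨅ (u : X → ℝ) (_ : MemFrac μ s p q u ∧ lpNormP μ p u Set.univ < ⊤ ∧
      ∃ U : Set X, IsOpen U ∧ E ⊆ U ∧ ∀ x ∈ U, 1 ≤ u x),
    (lpNormP μ p u Set.univ ^ (1 / p) + fracNorm μ s p q u) ^ p

/-- `W^{s,p}_q`-quasicontinuity of `u`. -/
def FracQC (μ : Measure X) (s p q : ℝ) (u : X → ℝ) : Prop :=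
  ∀ ε : ℝ, 0 < ε → ∃ E : Set X,
    fracCapacity μ s p q E < ENNReal.ofReal ε ∧ ContinuousOn u Eᶜ

lemma abs_min_one_sub (a b : ℝ) : |min 1 a - min 1 b| ≤ |a - b| := by
  have h1 := le_abs_self (a - b)
  have h2 := neg_abs_le (a - b)
  rcases le_total 1 a with ha | ha <;> rcases le_total 1 b with hb | hb <;>
    rw [abs_le] <;> constructor <;>
      simp only [min_eq_left, min_eq_right, ha, hb] <;> linarith

lemma lip_min_max (c a b : ℝ) (hc : 0 ≤ c) :
    |min 1 (c * max a 0) - min 1 (c * max b 0)| ≤ c * |a - b| := by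
  calc |min 1 (c * max a 0) - min 1 (c * max b 0)| ≤ |c * max a 0 - c * max b 0| :=
        abs_min_one_sub _ _
    _ = c * |max a 0 - max b 0| := by
        rw [← mul_sub, abs_mul, abs_of_nonneg hc]
    _ ≤ c * |a - b| := by
        have := abs_max_sub_max_le_abs a b 0
        exact mul_le_mul_of_nonneg_left this hc

lemma ennreal_add_rpow_le (p : ℝ) (hp : 0 ≤ p) (a b : ℝ≥0∞) :
    (a + b) ^ p ≤ 2 ^ p * (a ^ p + b ^ p) := by
  have h1 : a + b ≤ 2 * max a b := by
    rcases le_total a b with h | h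
    · simp [max_eq_right h, two_mul]; exact add_le_add_left h b
    · simp [max_eq_left h, two_mul]; exact add_le_add_right h a
  calc (a + b) ^ p ≤ (2 * max a b) ^ p := ENNReal.rpow_le_rpow h1 hp
    _ = 2 ^ p * (max a b) ^ p := ENNReal.mul_rpow_of_nonneg _ _ hp
    _ ≤ 2 ^ p * (a ^ p + b ^ p) := by
        gcongr
        rcases le_total a b with h | h
        · rw [max_eq_right h]; exact le_add_self
        · rw [max_eq_left h]; exact le_add_right le_rfl

lemma doub_iter (μ : Measure X) (cμ : ℝ)
    (hdoub : ∀ (x : X) (r : ℝ), 0 < r → μ (ball x (2 * r)) ≤ ENNReal.ofReal cμ * μ (ball x r))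
    (x : X) (n : ℕ) (r : ℝ) (hr : 0 < r) :
    μ (ball x (2 ^ n * r)) ≤ (ENNReal.ofReal cμ) ^ n * μ (ball x r) := by
  induction n with
  | zero => simp
  | succ n ih =>
      have h2 : (2 : ℝ) ^ (n + 1) * r = 2 * (2 ^ n * r) := by ring
      rw [h2]
      calc μ (ball x (2 * (2 ^ n * r))) ≤ ENNReal.ofReal cμ * μ (ball x (2 ^ n * r)) :=
            hdoub x _ (by positivity)
        _ ≤ ENNReal.ofReal cμ * ((ENNReal.ofReal cμ) ^ n * μ (ball x r)) := by gcongr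
        _ = (ENNReal.ofReal cμ) ^ (n + 1) * μ (ball x r) := by ring

lemma keyLemma (μ : Measure X) (p : ℝ) (hp : 0 < p)
    (w : X → ℝ) (G : X → ℝ≥0∞)
    (N : Set X) (hN : μ N = 0)
    (F Z : Set X) (hF : MeasurableSet F) (hZ : MeasurableSet Z) (hZF : Z ⊆ F)
    (hw0 : ∀ x ∈ Z, w x = 0) (hZtop : μ Z ≠ ⊤)
    (D : ℝ≥0∞) (hD : D ≠ ⊤)
    (hgrad : ∀ x ∈ F, x ∉ N → ∀ y ∈ Z, y ∉ N →
      ENNReal.ofReal |w x - w y| ≤ D * (G x + G y)) :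
    μ Z * ∫⁻ x in F, ENNReal.ofReal |w x| ^ p ∂μ ≤
      2 ^ p * D ^ p * ((μ Z + μ F) * ∫⁻ x in F, G x ^ p ∂μ) := by
  have hcne : (2 : ℝ≥0∞) ^ p * D ^ p ≠ ⊤ := by
    apply ENNReal.mul_ne_top
    · exact (ENNReal.rpow_lt_top_of_nonneg hp.le (by norm_num)).ne
    · exact (ENNReal.rpow_lt_top_of_nonneg hp.le hD).ne
  have hNae : ∀ᵐ x ∂μ, x ∉ N := by
    rw [ae_iff]; simpa using hN
  have step1 : ∀ x ∈ F, x ∉ N →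
      ENNReal.ofReal |w x| ^ p * μ Z ≤
        2 ^ p * D ^ p * (G x ^ p * μ Z + ∫⁻ y in Z, G y ^ p ∂μ) := by
    intro x hxF hxN
    have h1 : ENNReal.ofReal |w x| ^ p * μ Z =
        ∫⁻ _ in Z, ENNReal.ofReal |w x| ^ p ∂μ := (setLIntegral_const _ _).symm
    rw [h1]
    have h2 : ∫⁻ y in Z, ENNReal.ofReal |w x| ^ p ∂μ ≤
        ∫⁻ y in Z, 2 ^ p * D ^ p * (G x ^ p + G y ^ p) ∂μ := by
      apply lintegral_mono_ae
      filter_upwards [ae_restrict_of_ae hNae, ae_restrict_mem hZ] with y hyN hyZ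
      have hw : w y = 0 := hw0 y hyZ
      have h3 : ENNReal.ofReal |w x| ≤ D * (G x + G y) := by
        have := hgrad x hxF hxN y hyZ hyN
        rwa [hw, sub_zero] at this
      calc ENNReal.ofReal |w x| ^ p ≤ (D * (G x + G y)) ^ p :=
            ENNReal.rpow_le_rpow h3 hp.le
        _ = D ^ p * (G x + G y) ^ p := ENNReal.mul_rpow_of_nonneg _ _ hp.le
        _ ≤ D ^ p * (2 ^ p * (G x ^ p + G y ^ p)) := by
            gcongr
            exact ennreal_add_rpow_le p hp.le _ _
        _ = 2 ^ p * D ^ p * (G x ^ p + G y ^ p) := by ring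
    refine h2.trans_eq ?_
    rw [lintegral_const_mul' _ _ hcne, lintegral_add_left (by measurability),
      setLIntegral_const]
  have step2 : (∫⁻ x in F, ENNReal.ofReal |w x| ^ p ∂μ) * μ Z ≤
      ∫⁻ x in F, 2 ^ p * D ^ p * (G x ^ p * μ Z + ∫⁻ y in Z, G y ^ p ∂μ) ∂μ := by
    rw [← lintegral_mul_const' _ _ hZtop]
    apply lintegral_mono_ae
    filter_upwards [ae_restrict_of_ae hNae, ae_restrict_mem hF] with x hxN hxF
    exact step1 x hxF hxN
  have step3 : ∫⁻ x in F, 2 ^ p * D ^ p * (G x ^ p * μ Z + ∫⁻ y in Z, G y ^ p ∂μ) ∂μ =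
      2 ^ p * D ^ p * ((∫⁻ x in F, G x ^ p ∂μ) * μ Z +
        (∫⁻ y in Z, G y ^ p ∂μ) * μ F) := by
    rw [lintegral_const_mul' _ _ hcne, lintegral_add_right _ measurable_const,
      lintegral_mul_const' _ _ hZtop, setLIntegral_const]
  calc μ Z * ∫⁻ x in F, ENNReal.ofReal |w x| ^ p ∂μ
      = (∫⁻ x in F, ENNReal.ofReal |w x| ^ p ∂μ) * μ Z := mul_comm _ _
    _ ≤ 2 ^ p * D ^ p * ((∫⁻ x in F, G x ^ p ∂μ) * μ Z +
        (∫⁻ y in Z, G y ^ p ∂μ) * μ F) := step2.trans_eq step3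
    _ ≤ 2 ^ p * D ^ p * ((∫⁻ x in F, G x ^ p ∂μ) * μ Z +
        (∫⁻ y in F, G y ^ p ∂μ) * μ F) := by
        gcongr
    _ = 2 ^ p * D ^ p * ((μ Z + μ F) * ∫⁻ x in F, G x ^ p ∂μ) := by ring

lemma median_bounds (μ : Measure X) (u : X → ℝ) (hu : Measurable u)
    (A : Set X) (hA : MeasurableSet A) (h0 : μ A ≠ 0) (hfin : μ A ≠ ⊤)
    (ε : ℝ) (hε : 0 < ε) :
    μ {x | x ∈ A ∧ median μ u A + ε < u x} ≤ μ A / 2 ∧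
    μ {x | x ∈ A ∧ u x < median μ u A - ε} ≤ μ A / 2 := by
  set S : Set ℝ := {a : ℝ | μ {x | x ∈ A ∧ a < u x} < μ A / 2} with hS
  have hmeas : ∀ c : ℝ, MeasurableSet {x | x ∈ A ∧ c < u x} := by
    intro c
    exact hA.inter (measurableSet_lt measurable_const hu)
  have hmono : ∀ a b : ℝ, a ≤ b → {x | x ∈ A ∧ b < u x} ⊆ {x | x ∈ A ∧ a < u x} := by
    intro a b hab x hx
    exact ⟨hx.1, lt_of_le_of_lt hab hx.2⟩
  have hSne : S.Nonempty := by
    set T : ℕ → Set X := fun n => {x | x ∈ A ∧ (n : ℝ) < u x} with hT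
    have hanti : Antitone T := fun m n hmn => hmono _ _ (Nat.cast_le.mpr hmn)
    have hint : ⋂ n, T n = ∅ := by
      ext x
      simp only [mem_iInter, mem_empty_iff_false, iff_false, not_forall]
      obtain ⟨n, hn⟩ := exists_nat_gt (u x)
      exact ⟨n, fun h => absurd h.2 (not_lt.mpr hn.le)⟩
    have htend : Tendsto (fun n => μ (T n)) atTop (𝓝 0) := by
      have := tendsto_measure_iInter_atTop (μ := μ) (s := T)
        (fun n => (hmeas (n : ℝ)).nullMeasurableSet) hanti
        ⟨0, by exact ((measure_mono (fun x hx => hx.1)).trans_lt hfin.lt_top).ne⟩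
      rwa [hint, measure_empty] at this
    have hh : (0 : ℝ≥0∞) < μ A / 2 := ENNReal.half_pos h0
    obtain ⟨n, hn⟩ := (htend.eventually_lt_const hh).exists
    exact ⟨(n : ℝ), hn⟩
  have hbdd : BddBelow S := by
    set T : ℕ → Set X := fun n => {x | x ∈ A ∧ (-(n : ℝ)) < u x} with hT
    have hmonoT : Monotone T := fun m n hmn =>
      hmono _ _ (neg_le_neg (Nat.cast_le.mpr hmn))
    have hun : ⋃ n, T n = A := by
      ext x
      simp only [mem_iUnion, hT, mem_setOf_eq]
      constructor
      · rintro ⟨n, hn⟩; exact hn.1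
      · intro hx
        obtain ⟨n, hn⟩ := exists_nat_gt (-(u x))
        exact ⟨n, hx, by linarith⟩
    have htend : Tendsto (fun n => μ (T n)) atTop (𝓝 (μ A)) := by
      have := tendsto_measure_iUnion_atTop (μ := μ) (s := T) hmonoT
      rwa [hun] at this
    have hh : μ A / 2 < μ A := ENNReal.half_lt_self h0 hfin
    obtain ⟨n, hn⟩ := (htend.eventually_const_lt hh).exists
    refine ⟨-(n : ℝ), fun a ha => ?_⟩
    by_contra hcon
    push_neg at hcon
    have hsub : T n ⊆ {x | x ∈ A ∧ a < u x} := hmono _ _ hcon.le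
    have := (measure_mono hsub).trans_lt ha
    exact absurd hn (not_lt.mpr this.le)
  have hmed : median μ u A = sInf S := rfl
  constructor
  · obtain ⟨a, haS, ha⟩ := exists_lt_of_csInf_lt hSne
      (show sInf S < median μ u A + ε by rw [hmed]; linarith)
    calc μ {x | x ∈ A ∧ median μ u A + ε < u x} ≤ μ {x | x ∈ A ∧ a < u x} :=
          measure_mono (hmono _ _ ha.le)
      _ ≤ μ A / 2 := haS.le
  · have hnotin : (median μ u A - ε) ∉ S := by
      intro h
      have := csInf_le hbdd h
      rw [← hmed] at this
      linarith
    have hge : μ A / 2 ≤ μ {x | x ∈ A ∧ median μ u A - ε < u x} := not_lt.mp hnotin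
    set Q : Set X := {x | x ∈ A ∧ median μ u A - ε < u x} with hQ
    have hsub : {x | x ∈ A ∧ u x < median μ u A - ε} ⊆ A \ Q := by
      intro x hx
      exact ⟨hx.1, fun h => absurd hx.2 (not_lt.mpr h.2.le)⟩
    have hQA : Q ⊆ A := fun x hx => hx.1
    have hQfin : μ Q ≠ ⊤ := ((measure_mono hQA).trans_lt hfin.lt_top).ne
    calc μ {x | x ∈ A ∧ u x < median μ u A - ε} ≤ μ (A \ Q) := measure_mono hsub
      _ = μ A - μ Q := measure_diff hQA (hmeas _).nullMeasurableSet hQfin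
      _ ≤ μ A - μ A / 2 := tsub_le_tsub_left hge _
      _ = μ A / 2 := ENNReal.sub_half hfin

/-- Lemma 6.3: a capacitary weak type estimate. For every `Λ ≥ 1`
there is a constant `C = C(p, c_μ, c_R, Λ) > 0` such that, for the superlevel set
`E_t` of `|u - m_u(A_{κ^j}(O))|` inside the annulus, and every `s`-gradient `g` of `u`,
`cap_{s,p}(E_t, Λ A_{κ^j}(O)) ≤ (C / t^p) ∫_{Λ A_{κ^j}(O)} g^p dμ`. -/
theorem statement7 [BorelSpace X]
    (μ : Measure X) (hcomp : μ.IsComplete)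
    (hball : ∀ (x : X) (r : ℝ), 0 < r → 0 < μ (ball x r) ∧ μ (ball x r) < ⊤)
    (hdiam : EMetric.diam (Set.univ : Set X) = ⊤)
    (cμ : ℝ) (hcμ : 1 ≤ cμ)
    (hdoub : ∀ (x : X) (r : ℝ), 0 < r → μ (ball x (2 * r)) ≤ ENNReal.ofReal cμ * μ (ball x r))
    (cR κ : ℝ) (hcR0 : 0 < cR) (hcR1 : cR < 1) (hκ : 1 < κ)
    (hrev : ∀ (x : X) (r : ℝ), 0 < r → μ (ball x r) ≤ ENNReal.ofReal cR * μ (ball x (κ * r)))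
    (s p : ℝ) (hs0 : 0 < s) (hs1 : s ≤ 1) (hp : 0 < p)
    (u : X → ℝ) (hu : MemHomHajlasz μ s p u) (huqc : HajlaszQC μ s p u) :
    ∀ Λ : ℝ, 1 ≤ Λ → ∃ C : ℝ≥0∞, 0 < C ∧ C < ⊤ ∧
      ∀ (O : X) (j : ℕ) (t : ℝ), 0 < t →
      ∀ g : X → ℝ≥0∞, IsSGradient μ s u g →
        relCap μ s p
            {x : X | x ∈ ann κ O (κ ^ j) ∧ t < |u x - median μ u (ann κ O (κ ^ j))|}
            (annL κ Λ O (κ ^ j)) ≤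
          C / ENNReal.ofReal (t ^ p) * ∫⁻ x in annL κ Λ O (κ ^ j), g x ^ p ∂μ := by
  intro Λ hΛ
  obtain ⟨n, hn⟩ := pow_unbounded_of_one_lt Λ (one_lt_two (α := ℝ))
  set c1 : ℝ≥0∞ := ENNReal.ofReal (1 - cR) / 2 with hc1
  set c3 : ℝ≥0∞ := (ENNReal.ofReal cμ) ^ n with hc3
  have hc10 : c1 ≠ 0 := by
    rw [hc1]
    exact ENNReal.div_ne_zero.mpr ⟨(ENNReal.ofReal_pos.mpr (by linarith)).ne',
      (by norm_num : (2 : ℝ≥0∞) ≠ ⊤)⟩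
  have hc1top : c1 ≠ ⊤ := by
    rw [hc1]
    exact (ENNReal.div_lt_top ENNReal.ofReal_ne_top (by norm_num)).ne
  have h2pne : (2 : ℝ≥0∞) ^ p ≠ ⊤ := (ENNReal.rpow_lt_top_of_nonneg hp.le (by norm_num)).ne
  have hc3top : c3 ≠ ⊤ := by
    rw [hc3]
    exact (ENNReal.pow_ne_top ENNReal.ofReal_ne_top)
  set K : ℝ≥0∞ := (2 : ℝ≥0∞) ^ p * 2 * c3 * c1⁻¹ with hK
  have hKtop : K ≠ ⊤ := by
    rw [hK]
    exact ENNReal.mul_ne_top (ENNReal.mul_ne_top (ENNReal.mul_ne_top h2pne (by norm_num))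
      hc3top) (ENNReal.inv_ne_top.mpr hc10)
  set C : ℝ≥0∞ := 2 ^ p * 2 * K * ENNReal.ofReal (2 ^ p) + ENNReal.ofReal ((4 : ℝ) ^ p)
    with hC
  refine ⟨C, ?_, ?_, ?_⟩
  · calc (0 : ℝ≥0∞) < ENNReal.ofReal ((4 : ℝ) ^ p) :=
        ENNReal.ofReal_pos.mpr (Real.rpow_pos_of_pos (by norm_num) p)
      _ ≤ C := le_add_self
  · rw [hC]
    exact ENNReal.add_lt_top.mpr ⟨ENNReal.mul_lt_top
      (ENNReal.mul_lt_top (ENNReal.mul_lt_top h2pne.lt_top (by norm_num)) hKtop.lt_top)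
      ENNReal.ofReal_lt_top, ENNReal.ofReal_lt_top⟩
  intro O j t ht g hg
  obtain ⟨hgmeas, N, hN, hgrad⟩ := hg
  set rj : ℝ := κ ^ j with hrj
  have hrjpos : 0 < rj := pow_pos (by linarith) j
  set ρ : ℝ := κ * rj with hρdef
  have hρ : 0 < ρ := mul_pos (by linarith) hrjpos
  set B : Set X := ball O ρ with hB
  set A : Set X := ann κ O rj with hA
  set F : Set X := annL κ Λ O rj with hF
  set m : ℝ := median μ u A with hm
  have hAmeas : MeasurableSet A := measurableSet_ball.diff measurableSet_ball
  have hFmeas : MeasurableSet F := measurableSet_ball.diff measurableSet_ball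
  have hAB : A ⊆ B := diff_subset
  have hAF : A ⊆ F := by
    intro x hx
    refine ⟨?_, ?_⟩
    · exact ball_subset_ball (by nlinarith) hx.1
    · intro hxb
      exact hx.2 (ball_subset_ball (div_le_self hrjpos.le hΛ) hxb)
  have hFB' : F ⊆ ball O (Λ * ρ) := diff_subset
  have hμB0 : μ B ≠ 0 := (hball O ρ hρ).1.ne'
  have hμBfin : μ B ≠ ⊤ := (hball O ρ hρ).2.ne
  have hμF : μ F ≤ c3 * μ B := by
    calc μ F ≤ μ (ball O (Λ * ρ)) := measure_mono hFB'
      _ ≤ μ (ball O (2 ^ n * ρ)) :=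
          measure_mono (ball_subset_ball (mul_le_mul_of_nonneg_right hn.le hρ.le))
      _ ≤ c3 * μ B := doub_iter μ cμ hdoub O n ρ hρ
  have hμFfin : μ F ≠ ⊤ :=
    (hμF.trans_lt (ENNReal.mul_lt_top hc3top.lt_top hμBfin.lt_top)).ne
  have hμA : ENNReal.ofReal (1 - cR) * μ B ≤ μ A := by
    have h1 : μ (ball O rj) ≤ ENNReal.ofReal cR * μ B := hrev O rj hrjpos
    have h2 : ENNReal.ofReal (1 - cR) * μ B ≤ μ B - μ (ball O rj) := by
      have h3 : ENNReal.ofReal (1 - cR) * μ B + μ (ball O rj) ≤ μ B := by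
        calc ENNReal.ofReal (1 - cR) * μ B + μ (ball O rj)
            ≤ ENNReal.ofReal (1 - cR) * μ B + ENNReal.ofReal cR * μ B :=
              add_le_add_right h1 _
          _ = (ENNReal.ofReal (1 - cR) + ENNReal.ofReal cR) * μ B := (add_mul _ _ _).symm
          _ = μ B := by
              rw [← ENNReal.ofReal_add (by linarith) hcR0.le]
              norm_num
      exact ENNReal.le_sub_of_add_le_right (((measure_mono (ball_subset_ball (by nlinarith : rj ≤ ρ))).trans_lt hμBfin.lt_top).ne) h3
    calc ENNReal.ofReal (1 - cR) * μ B ≤ μ B - μ (ball O rj) := h2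
      _ ≤ μ (B \ ball O rj) := le_measure_diff
      _ = μ A := rfl
  have hμA0 : μ A ≠ 0 := by
    refine fun h => absurd (hμA.trans_eq h) (not_le.mpr ?_)
    exact ENNReal.mul_pos (ENNReal.ofReal_pos.mpr (by linarith)).ne' hμB0
  have hμAfin : μ A ≠ ⊤ := ((measure_mono hAB).trans_lt hμBfin.lt_top).ne
  have ht2 : 0 < t / 2 := by linarith
  obtain ⟨hup, hlow⟩ := median_bounds μ u hu.1 A hAmeas hμA0 hμAfin (t / 2) ht2
  -- bad sets and zero sets
  set badp : Set X := {x | x ∈ A ∧ m + t / 2 < u x} with hbadp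
  set badm : Set X := {x | x ∈ A ∧ u x < m - t / 2} with hbadm
  set Zp : Set X := A \ badp with hZp
  set Zm : Set X := A \ badm with hZm
  have hbadpmeas : MeasurableSet badp := hAmeas.inter (measurableSet_lt measurable_const hu.1)
  have hbadmmeas : MeasurableSet badm := hAmeas.inter (measurableSet_lt hu.1 measurable_const)
  have hZpmeas : MeasurableSet Zp := hAmeas.diff hbadpmeas
  have hZmmeas : MeasurableSet Zm := hAmeas.diff hbadmmeas
  have hZlower : ∀ (bad : Set X), μ bad ≤ μ A / 2 → c1 * μ B ≤ μ (A \ bad) := by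
    intro bad hbad
    calc c1 * μ B = (ENNReal.ofReal (1 - cR) * μ B) / 2 := by
          rw [hc1, div_eq_mul_inv, div_eq_mul_inv]; ring
      _ ≤ μ A / 2 := by gcongr
      _ = μ A - μ A / 2 := (ENNReal.sub_half hμAfin).symm
      _ ≤ μ A - μ bad := tsub_le_tsub_left hbad _
      _ ≤ μ (A \ bad) := le_measure_diff
  have hZplower : c1 * μ B ≤ μ Zp := hZlower badp hup
  have hZmlower : c1 * μ B ≤ μ Zm := hZlower badm hlow
  have hZpF : Zp ⊆ F := (diff_subset.trans hAF)
  have hZmF : Zm ⊆ F := (diff_subset.trans hAF)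
  have hZpfin : μ Zp ≠ ⊤ := ((measure_mono hZpF).trans_lt hμFfin.lt_top).ne
  have hZmfin : μ Zm ≠ ⊤ := ((measure_mono hZmF).trans_lt hμFfin.lt_top).ne
  -- test function
  have h2t : (0 : ℝ) ≤ 2 / t := by positivity
  have h4t : (0 : ℝ) ≤ 4 / t := by positivity
  set φp : ℝ → ℝ := fun z => min 1 (2 / t * max (z - (m + t / 2)) 0) with hφp
  set φm : ℝ → ℝ := fun z => min 1 (2 / t * max ((m - t / 2) - z) 0) with hφm
  set v : X → ℝ := fun x => φp (u x) + φm (u x) with hv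
  have hφpnn : ∀ z, 0 ≤ φp z := fun z => le_min zero_le_one (by positivity)
  have hφmnn : ∀ z, 0 ≤ φm z := fun z => le_min zero_le_one (by positivity)
  have hφplip : ∀ z w : ℝ, |φp z - φp w| ≤ 2 / t * |z - w| := by
    intro z w
    have := lip_min_max (2 / t) (z - (m + t / 2)) (w - (m + t / 2)) h2t
    simpa using this
  have hφmlip : ∀ z w : ℝ, |φm z - φm w| ≤ 2 / t * |z - w| := by
    intro z w
    have := lip_min_max (2 / t) ((m - t / 2) - z) ((m - t / 2) - w) h2t
    have heq : (m - t / 2) - z - ((m - t / 2) - w) = -(z - w) := by ring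
    rw [heq, abs_neg] at this
    exact this
  have hvlip : ∀ x y : X, |v x - v y| ≤ 4 / t * |u x - u y| := by
    intro x y
    have h1 : v x - v y = (φp (u x) - φp (u y)) + (φm (u x) - φm (u y)) := by
      rw [hv]; ring
    calc |v x - v y| ≤ |φp (u x) - φp (u y)| + |φm (u x) - φm (u y)| := by
          rw [h1]; exact abs_add_le _ _
      _ ≤ 2 / t * |u x - u y| + 2 / t * |u x - u y| :=
          add_le_add (hφplip _ _) (hφmlip _ _)
      _ = 4 / t * |u x - u y| := by ring
  have hφcont : Continuous (fun z : ℝ => φp z + φm z) := by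
    rw [hφp, hφm]; fun_prop
  have hvmeas : Measurable v := hφcont.measurable.comp hu.1
  -- v is in the homogeneous space
  have hgradv : ∀ h : X → ℝ≥0∞, IsSGradient μ s u h →
      IsSGradient μ s v (fun x => ENNReal.ofReal (4 / t) * h x) := by
    rintro h ⟨hhm, Nh, hNh, hh⟩
    refine ⟨measurable_const.mul hhm, Nh, hNh, fun x hx y hy => ?_⟩
    calc ENNReal.ofReal |v x - v y| ≤ ENNReal.ofReal (4 / t * |u x - u y|) :=
          ENNReal.ofReal_le_ofReal (hvlip x y)
      _ = ENNReal.ofReal (4 / t) * ENNReal.ofReal |u x - u y| := ENNReal.ofReal_mul h4t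
      _ ≤ ENNReal.ofReal (4 / t) * (ENNReal.ofReal (dist x y ^ s) * (h x + h y)) := by
          gcongr
          exact hh x hx y hy
      _ = ENNReal.ofReal (dist x y ^ s) *
          (ENNReal.ofReal (4 / t) * h x + ENNReal.ofReal (4 / t) * h y) := by ring
  have h4tpne : (ENNReal.ofReal (4 / t)) ^ p ≠ ⊤ :=
    (ENNReal.rpow_lt_top_of_nonneg hp.le ENNReal.ofReal_ne_top).ne
  have hvmem : MemHomHajlasz μ s p v := by
    refine ⟨hvmeas, ?_⟩
    obtain ⟨g₀, hg₀, hg₀fin⟩ := hu.2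
    refine ⟨fun x => ENNReal.ofReal (4 / t) * g₀ x, hgradv g₀ hg₀, ?_⟩
    have heq : ∀ x, (ENNReal.ofReal (4 / t) * g₀ x) ^ p =
        (ENNReal.ofReal (4 / t)) ^ p * g₀ x ^ p :=
      fun x => ENNReal.mul_rpow_of_nonneg _ _ hp.le
    simp_rw [heq]
    rw [lintegral_const_mul' _ _ h4tpne]
    exact ENNReal.mul_lt_top h4tpne.lt_top hg₀fin
  have hvqc : HajlaszQC μ s p v := by
    intro ε hε
    obtain ⟨E, hE1, hE2⟩ := huqc ε hε
    exact ⟨E, hE1, hφcont.comp_continuousOn hE2⟩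
  have hv1 : ∀ x ∈ {x : X | x ∈ A ∧ t < |u x - m|}, 1 ≤ v x := by
    intro x hx
    obtain ⟨hxA, hxt⟩ := hx
    rcases lt_abs.mp hxt with h | h
    · have hmax : max (u x - (m + t / 2)) 0 = u x - (m + t / 2) :=
        max_eq_left (by linarith)
      have h1 : (1 : ℝ) ≤ 2 / t * max (u x - (m + t / 2)) 0 := by
        rw [hmax]
        have : t / 2 ≤ u x - (m + t / 2) := by linarith
        calc (1 : ℝ) = 2 / t * (t / 2) := by field_simp
          _ ≤ 2 / t * (u x - (m + t / 2)) := by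
              exact mul_le_mul_of_nonneg_left this h2t
      have : φp (u x) = 1 := by rw [hφp]; exact min_eq_left h1
      have h2 := hφmnn (u x)
      rw [hv]
      simp only
      linarith
    · have h1 : (1 : ℝ) ≤ 2 / t * max ((m - t / 2) - u x) 0 := by
        rw [max_eq_left (by linarith)]
        have : t / 2 ≤ (m - t / 2) - u x := by linarith
        calc (1 : ℝ) = 2 / t * (t / 2) := by field_simp
          _ ≤ 2 / t * ((m - t / 2) - u x) := mul_le_mul_of_nonneg_left this h2t
      have : φm (u x) = 1 := by rw [hφm]; exact min_eq_left h1
      have h2 := hφpnn (u x)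
      rw [hv]
      simp only
      linarith
  -- apply the infimum
  rw [relCap]
  refine le_trans (iInf₂_le v ⟨hvmem, hvqc, hv1⟩) ?_
  -- notation
  set τ : ℝ≥0∞ := ENNReal.ofReal (t ^ p) with hτ
  set Ig : ℝ≥0∞ := ∫⁻ x in F, g x ^ p ∂μ with hIg
  set G2 : X → ℝ≥0∞ := fun x => ENNReal.ofReal (2 / t) * g x with hG2
  set D : ℝ≥0∞ := ENNReal.ofReal (Metric.diam F ^ s) with hD
  have hDne : D ≠ ⊤ := ENNReal.ofReal_ne_top
  have hFb : Bornology.IsBounded F := Metric.isBounded_ball.subset hFB'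
  have hDp : ∀ x ∈ F, ∀ y ∈ F, ENNReal.ofReal (dist x y ^ s) ≤ D := by
    intro x hx y hy
    exact ENNReal.ofReal_le_ofReal
      (Real.rpow_le_rpow dist_nonneg (dist_le_diam_of_mem hFb hx hy) hs0.le)
  set IGint : ℝ≥0∞ := ∫⁻ x in F, G2 x ^ p ∂μ with hIGint
  have h2tpne : (ENNReal.ofReal (2 / t)) ^ p ≠ ⊤ :=
    (ENNReal.rpow_lt_top_of_nonneg hp.le ENNReal.ofReal_ne_top).ne
  have hIGeq : IGint = (ENNReal.ofReal (2 / t)) ^ p * Ig := by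
    rw [hIGint, hIg]
    have heq : ∀ x, G2 x ^ p = (ENNReal.ofReal (2 / t)) ^ p * g x ^ p := by
      intro x
      rw [hG2]
      exact ENNReal.mul_rpow_of_nonneg _ _ hp.le
    simp_rw [heq]
    exact lintegral_const_mul' _ _ h2tpne
  -- the gradient bound for the composed functions
  have hgradφ : ∀ (φ : ℝ → ℝ), (∀ z w : ℝ, |φ z - φ w| ≤ 2 / t * |z - w|) →
      ∀ x ∈ F, x ∉ N → ∀ y ∈ F, y ∉ N →
        ENNReal.ofReal |φ (u x) - φ (u y)| ≤ D * (G2 x + G2 y) := by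
    intro φ hφ x hxF hxN y hyF hyN
    calc ENNReal.ofReal |φ (u x) - φ (u y)| ≤ ENNReal.ofReal (2 / t * |u x - u y|) :=
          ENNReal.ofReal_le_ofReal (hφ _ _)
      _ = ENNReal.ofReal (2 / t) * ENNReal.ofReal |u x - u y| := ENNReal.ofReal_mul h2t
      _ ≤ ENNReal.ofReal (2 / t) * (ENNReal.ofReal (dist x y ^ s) * (g x + g y)) := by
          gcongr
          exact hgrad x hxN y hyN
      _ ≤ ENNReal.ofReal (2 / t) * (D * (g x + g y)) := by
          gcongr
          exact hDp x hxF y hyF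
      _ = D * (G2 x + G2 y) := by rw [hG2]; ring
  -- key estimates for the two pieces
  have hbound : ∀ (φ : ℝ → ℝ) (Z : Set X), MeasurableSet Z → Z ⊆ F → μ Z ≠ ⊤ →
      c1 * μ B ≤ μ Z → (∀ x ∈ Z, φ (u x) = 0) →
      (∀ z w : ℝ, |φ z - φ w| ≤ 2 / t * |z - w|) →
      ∫⁻ x in F, ENNReal.ofReal |φ (u x)| ^ p ∂μ ≤ K * (D ^ p * IGint) := by
    intro φ Z hZmeas hZF hZfin hZlow hφ0 hφlipZ
    set Ip : ℝ≥0∞ := ∫⁻ x in F, ENNReal.ofReal |φ (u x)| ^ p ∂μ with hIp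
    have key := keyLemma μ p hp (fun x => φ (u x)) G2 N hN F Z hFmeas hZmeas hZF
      hφ0 hZfin D hDne
      (fun x hxF hxN y hyZ hyN => hgradφ φ hφlipZ x hxF hxN y (hZF hyZ) hyN)
    have hZμF : μ Z + μ F ≤ 2 * (c3 * μ B) := by
      have h1 : μ Z ≤ c3 * μ B := (measure_mono hZF).trans hμF
      calc μ Z + μ F ≤ c3 * μ B + c3 * μ B := add_le_add h1 hμF
        _ = 2 * (c3 * μ B) := (two_mul _).symm
    have hchain : μ B * (c1 * Ip) ≤ μ B * (2 ^ p * D ^ p * 2 * c3 * IGint) := by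
      calc μ B * (c1 * Ip) = (c1 * μ B) * Ip := by ring
        _ ≤ μ Z * Ip := mul_le_mul_left hZlow _
        _ ≤ 2 ^ p * D ^ p * ((μ Z + μ F) * IGint) := key
        _ ≤ 2 ^ p * D ^ p * ((2 * (c3 * μ B)) * IGint) := by gcongr
        _ = μ B * (2 ^ p * D ^ p * 2 * c3 * IGint) := by ring
    have h5 : c1 * Ip ≤ 2 ^ p * D ^ p * 2 * c3 * IGint :=
      (ENNReal.mul_le_mul_iff_right hμB0 hμBfin).mp hchain
    have h6 : Ip ≤ (2 ^ p * D ^ p * 2 * c3 * IGint) / c1 :=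
      (ENNReal.le_div_iff_mul_le (Or.inl hc10) (Or.inl hc1top)).mpr
        (by rw [mul_comm]; exact h5)
    calc Ip ≤ (2 ^ p * D ^ p * 2 * c3 * IGint) / c1 := h6
      _ = K * (D ^ p * IGint) := by rw [hK, div_eq_mul_inv]; ring
  have hφp0 : ∀ x ∈ Zp, φp (u x) = 0 := by
    intro x hx
    have hxA : x ∈ A := hx.1
    have : ¬(x ∈ A ∧ m + t / 2 < u x) := hx.2
    have hle : u x ≤ m + t / 2 := by
      by_contra hcon
      exact this ⟨hxA, not_le.mp hcon⟩
    rw [hφp]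
    simp only
    rw [max_eq_right (by linarith), mul_zero, min_eq_right zero_le_one]
  have hφm0 : ∀ x ∈ Zm, φm (u x) = 0 := by
    intro x hx
    have hxA : x ∈ A := hx.1
    have : ¬(x ∈ A ∧ u x < m - t / 2) := hx.2
    have hle : m - t / 2 ≤ u x := by
      by_contra hcon
      exact this ⟨hxA, not_le.mp hcon⟩
    rw [hφm]
    simp only
    rw [max_eq_right (by linarith), mul_zero, min_eq_right zero_le_one]
  have hIpbound := hbound φp Zp hZpmeas hZpF hZpfin hZplower hφp0 hφplip
  have hImbound := hbound φm Zm hZmmeas hZmF hZmfin hZmlower hφm0 hφmlip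
  -- bound lpNormP of v
  have hum : Measurable u := hu.1
  have hmeasp : Measurable fun x => ENNReal.ofReal |φp (u x)| ^ p := by
    rw [hφp]
    fun_prop
  have hlp : lpNormP μ p v F ≤ 2 ^ p * ((∫⁻ x in F, ENNReal.ofReal |φp (u x)| ^ p ∂μ) +
      ∫⁻ x in F, ENNReal.ofReal |φm (u x)| ^ p ∂μ) := by
    rw [lpNormP]
    calc ∫⁻ x in F, ENNReal.ofReal |v x| ^ p ∂μ
        ≤ ∫⁻ x in F, 2 ^ p * (ENNReal.ofReal |φp (u x)| ^ p +
            ENNReal.ofReal |φm (u x)| ^ p) ∂μ := by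
          apply lintegral_mono
          intro x
          have hnn : 0 ≤ φp (u x) + φm (u x) := add_nonneg (hφpnn _) (hφmnn _)
          have hvx : |v x| = φp (u x) + φm (u x) := abs_of_nonneg hnn
          show ENNReal.ofReal |v x| ^ p ≤ _
          rw [hvx, ENNReal.ofReal_add (hφpnn _) (hφmnn _)]
          calc (ENNReal.ofReal (φp (u x)) + ENNReal.ofReal (φm (u x))) ^ p
              ≤ 2 ^ p * (ENNReal.ofReal (φp (u x)) ^ p + ENNReal.ofReal (φm (u x)) ^ p) :=
                ennreal_add_rpow_le p hp.le _ _
            _ = 2 ^ p * (ENNReal.ofReal |φp (u x)| ^ p + ENNReal.ofReal |φm (u x)| ^ p) := by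
                rw [abs_of_nonneg (hφpnn _), abs_of_nonneg (hφmnn _)]
      _ = 2 ^ p * ((∫⁻ x in F, ENNReal.ofReal |φp (u x)| ^ p ∂μ) +
          ∫⁻ x in F, ENNReal.ofReal |φm (u x)| ^ p ∂μ) := by
          rw [lintegral_const_mul' _ _ h2pne, lintegral_add_left hmeasp]
  -- diam identity
  have hd'eq : ENNReal.ofReal (Metric.diam F ^ (s * p)) = D ^ p := by
    rw [hD, ENNReal.ofReal_rpow_of_nonneg (Real.rpow_nonneg Metric.diam_nonneg s) hp.le,
      ← Real.rpow_mul Metric.diam_nonneg]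
  -- conversions of the t-factors
  have hcg : (ENNReal.ofReal (2 / t)) ^ p = ENNReal.ofReal ((2 : ℝ) ^ p) * τ⁻¹ := by
    rw [ENNReal.ofReal_rpow_of_nonneg h2t hp.le, Real.div_rpow (by norm_num) ht.le,
      ENNReal.ofReal_div_of_pos (Real.rpow_pos_of_pos ht p), hτ, div_eq_mul_inv]
  have hc4 : (ENNReal.ofReal (4 / t)) ^ p = ENNReal.ofReal ((4 : ℝ) ^ p) * τ⁻¹ := by
    rw [ENNReal.ofReal_rpow_of_nonneg h4t hp.le, Real.div_rpow (by norm_num) ht.le,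
      ENNReal.ofReal_div_of_pos (Real.rpow_pos_of_pos ht p), hτ, div_eq_mul_inv]
  -- first summand
  have hfirst : lpNormP μ p v F / ENNReal.ofReal (Metric.diam F ^ (s * p)) ≤
      2 ^ p * 2 * K * (ENNReal.ofReal ((2 : ℝ) ^ p) * τ⁻¹ * Ig) := by
    rw [hd'eq]
    calc lpNormP μ p v F / D ^ p
        ≤ (2 ^ p * (K * (D ^ p * IGint) + K * (D ^ p * IGint))) / D ^ p := by
          exact ENNReal.div_le_div_right
            (hlp.trans (by gcongr)) _
      _ = (2 ^ p * 2 * K * IGint) * (D ^ p * (D ^ p)⁻¹) := by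
          rw [div_eq_mul_inv]; ring
      _ ≤ (2 ^ p * 2 * K * IGint) * 1 := by
          gcongr
          rw [← div_eq_mul_inv]
          exact ENNReal.div_self_le_one
      _ = 2 ^ p * 2 * K * IGint := mul_one _
      _ = 2 ^ p * 2 * K * (ENNReal.ofReal ((2 : ℝ) ^ p) * τ⁻¹ * Ig) := by
          rw [hIGeq, hcg]
  -- second summand
  have hsecond : (⨅ (g' : X → ℝ≥0∞) (_ : IsSGradient μ s v g'), ∫⁻ x in F, g' x ^ p ∂μ) ≤
      ENNReal.ofReal ((4 : ℝ) ^ p) * τ⁻¹ * Ig := by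
    refine le_trans (iInf₂_le (fun x => ENNReal.ofReal (4 / t) * g x) (hgradv g
      ⟨hgmeas, N, hN, hgrad⟩)) ?_
    have heq : ∀ x, (ENNReal.ofReal (4 / t) * g x) ^ p =
        (ENNReal.ofReal (4 / t)) ^ p * g x ^ p :=
      fun x => ENNReal.mul_rpow_of_nonneg _ _ hp.le
    have hcomp2 : ∫⁻ x in F, (ENNReal.ofReal (4 / t) * g x) ^ p ∂μ =
        ENNReal.ofReal ((4 : ℝ) ^ p) * τ⁻¹ * Ig := by
      simp_rw [heq]
      rw [lintegral_const_mul' _ _ h4tpne, hc4, hIg]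
    exact hcomp2.le
  calc lpNormP μ p v F / ENNReal.ofReal (Metric.diam F ^ (s * p)) +
      (⨅ (g' : X → ℝ≥0∞) (_ : IsSGradient μ s v g'), ∫⁻ x in F, g' x ^ p ∂μ)
      ≤ 2 ^ p * 2 * K * (ENNReal.ofReal ((2 : ℝ) ^ p) * τ⁻¹ * Ig) +
        ENNReal.ofReal ((4 : ℝ) ^ p) * τ⁻¹ * Ig := add_le_add hfirst hsecond
    _ = C * τ⁻¹ * Ig := by rw [hC]; ring
    _ = C / τ * Ig := by rw [div_eq_mul_inv]


end Paper
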